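/- Let F be a real 2d×2d symplectic matrix with block decomposition F = [[A, B], [C, D]] (each block d×d), and let Θ be a complex symmetric d×d matrix with positive definite real part. Then the complex matrix Y(F;Θ) := Dᵀ − i Bᵀ Θ is invertible. -/

import Mathlib

open Matrix

/-- The standard symplectic matrix `J = [[0, I], [-I, 0]]`. -/
noncomputable def symplJ (d : ℕ) : Matrix (Fin d ⊕ Fin d) (Fin d ⊕ Fin d) ℝ :=
  Matrix.fromBlocks 0 1 (-1) 0

/-- The real part of a complex matrix. -/
def matRe {d : ℕ} (Θ : Matrix (Fin d) (Fin d) ℂ) : Matrix (Fin d) (Fin d) ℝ :=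
  Matrix.of fun i j => (Θ i j).re

/-- `Y(F;Θ) = Dᵀ − i Bᵀ Θ`. -/
noncomputable def calY {d : ℕ} (B D : Matrix (Fin d) (Fin d) ℝ)
    (Θ : Matrix (Fin d) (Fin d) ℂ) : Matrix (Fin d) (Fin d) ℂ :=
  (D.map Complex.ofReal)ᵀ - Complex.I • ((B.map Complex.ofReal)ᵀ * Θ)

private lemma tdot {d : ℕ} (M : Matrix (Fin d) (Fin d) ℂ) (x w : Fin d → ℂ) :
    (Mᵀ *ᵥ x) ⬝ᵥ w = x ⬝ᵥ (M *ᵥ w) := by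
  rw [Matrix.mulVec_transpose, ← Matrix.dotProduct_mulVec]

private lemma star_real_mulVec {d : ℕ} (M : Matrix (Fin d) (Fin d) ℝ) (x : Fin d → ℂ) :
    star ((M.map Complex.ofReal)ᵀ *ᵥ x) = (M.map Complex.ofReal)ᵀ *ᵥ (star x) := by
  funext i
  simp [Matrix.mulVec, dotProduct, star_sum, star_mul', Complex.star_def,
    Complex.conj_ofReal]

/-- If `F = [[A,B],[C,D]]` is real symplectic and `Θ` is complex
symmetric with positive definite real part, then `Y(F;Θ) = Dᵀ − i Bᵀ Θ` is invertible. -/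
theorem calY_isUnit {d : ℕ} (A B C D : Matrix (Fin d) (Fin d) ℝ)
    (Θ : Matrix (Fin d) (Fin d) ℂ)
    (hsymp : (Matrix.fromBlocks A B C D)ᵀ * symplJ d * Matrix.fromBlocks A B C D = symplJ d)
    (hΘsymm : Θᵀ = Θ)
    (hΘre : (matRe Θ).PosDef) :
    IsUnit (calY B D Θ) := by
  classical
  set F := Matrix.fromBlocks A B C D with hF
  set J := symplJ d with hJdef
  -- J * J = -1
  have hJJ : J * J = -1 := by
    rw [hJdef, symplJ, Matrix.fromBlocks_multiply]
    simp [← Matrix.fromBlocks_one, Matrix.fromBlocks_neg]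
  have hJJ' : J * (-J) = 1 := by rw [Matrix.mul_neg, hJJ, neg_neg]
  -- F J Fᵀ = J
  have h1 : (-J * Fᵀ * J) * F = 1 := by
    calc (-J * Fᵀ * J) * F = -J * (Fᵀ * J * F) := by
          simp only [Matrix.mul_assoc, Matrix.neg_mul]
      _ = -J * J := by rw [hsymp]
      _ = 1 := by rw [Matrix.neg_mul, hJJ, neg_neg]
  have h2 : F * (-J * Fᵀ * J) = 1 := mul_eq_one_comm.mp h1
  have hs2 : F * J * Fᵀ = J := by
    have h3 : (F * (-J * Fᵀ * J)) * (-J) = -J := by rw [h2, Matrix.one_mul]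
    have h4 : F * -J * Fᵀ * (J * -J) = -J := by
      calc F * -J * Fᵀ * (J * -J) = (F * (-J * Fᵀ * J)) * (-J) := by
            simp only [Matrix.mul_assoc]
        _ = -J := h3
    rw [hJJ', Matrix.mul_one] at h4
    have := congrArg (fun M => -M) h4
    simpa [Matrix.mul_neg, Matrix.neg_mul] using this
  -- extract block relations over ℝ
  have hs3 : Matrix.fromBlocks (-(B * Aᵀ) + A * Bᵀ) (-(B * Cᵀ) + A * Dᵀ)
      (-(D * Aᵀ) + C * Bᵀ) (-(D * Cᵀ) + C * Dᵀ) = Matrix.fromBlocks 0 1 (-1) 0 := by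
    have := hs2
    rw [hF, hJdef, symplJ, Matrix.fromBlocks_transpose, Matrix.fromBlocks_multiply,
      Matrix.fromBlocks_multiply] at this
    simpa [Matrix.mul_neg, mul_neg_one] using this
  have R1 : -(B * Aᵀ) + A * Bᵀ = 0 := by
    have := congrArg Matrix.toBlocks₁₁ hs3
    simpa [Matrix.toBlocks_fromBlocks₁₁] using this
  have R2 : -(B * Cᵀ) + A * Dᵀ = 1 := by
    have := congrArg Matrix.toBlocks₁₂ hs3
    simpa [Matrix.toBlocks_fromBlocks₁₂] using this
  have R3 : -(D * Cᵀ) + C * Dᵀ = 0 := by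
    have := congrArg Matrix.toBlocks₂₂ hs3
    simpa [Matrix.toBlocks_fromBlocks₂₂] using this
  have R1' : A * Bᵀ = B * Aᵀ := by
    rw [neg_add_eq_sub] at R1; exact sub_eq_zero.mp R1
  have R2' : A * Dᵀ = 1 + B * Cᵀ := by
    rw [neg_add_eq_sub] at R2; exact sub_eq_iff_eq_add.mp R2
  have R3' : C * Dᵀ = D * Cᵀ := by
    rw [neg_add_eq_sub] at R3; exact sub_eq_zero.mp R3
  -- complexified blocks
  set A₁ := A.map Complex.ofReal with hA₁
  set B₁ := B.map Complex.ofReal with hB₁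
  set C₁ := C.map Complex.ofReal with hC₁
  set D₁ := D.map Complex.ofReal with hD₁
  have cmap : ∀ (M N : Matrix (Fin d) (Fin d) ℝ),
      (M * N).map Complex.ofReal = M.map Complex.ofReal * N.map Complex.ofReal := by
    intro M N
    exact Matrix.map_mul (f := Complex.ofRealHom)
  have cmap1 : ∀ (M : Matrix (Fin d) (Fin d) ℝ),
      (1 + M).map Complex.ofReal = 1 + M.map Complex.ofReal := by
    intro M
    funext i j
    simp [Matrix.map_apply, Matrix.one_apply, Matrix.add_apply, apply_ite Complex.ofReal]
  have R1c : A₁ * B₁ᵀ = B₁ * A₁ᵀ := by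
    have h := congrArg (fun M => M.map Complex.ofReal) R1'
    simp only [cmap] at h
    exact h
  have R2c : A₁ * D₁ᵀ = 1 + B₁ * C₁ᵀ := by
    have h := congrArg (fun M => M.map Complex.ofReal) R2'
    simp only [cmap1, cmap] at h
    exact h
  have R2c' : D₁ * A₁ᵀ = 1 + C₁ * B₁ᵀ := by
    have := congrArg Matrix.transpose R2c
    simpa [Matrix.transpose_mul, Matrix.transpose_add] using this
  have R3c : C₁ * D₁ᵀ = D₁ * C₁ᵀ := by
    have h := congrArg (fun M => M.map Complex.ofReal) R3'
    simp only [cmap] at h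
    exact h
  -- reduce to kernel statement
  rw [Matrix.isUnit_iff_isUnit_det, isUnit_iff_ne_zero]
  intro hdet
  obtain ⟨v, hv0, hv⟩ := Matrix.exists_mulVec_eq_zero_iff.mpr hdet
  set u := Θ *ᵥ v with hu
  set z := (-Complex.I) • u with hz
  -- the vector q = B₁ᵀ z + D₁ᵀ v vanishes
  have hq : B₁ᵀ *ᵥ z + D₁ᵀ *ᵥ v = 0 := by
    have : calY B D Θ *ᵥ v = D₁ᵀ *ᵥ v - Complex.I • (B₁ᵀ *ᵥ u) := by
      rw [calY, Matrix.sub_mulVec, Matrix.smul_mulVec, ← Matrix.mulVec_mulVec]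
    rw [hz, Matrix.mulVec_smul]
    rw [this] at hv
    rw [neg_smul]
    linear_combination (norm := module) hv
  have hqs : B₁ᵀ *ᵥ star z + D₁ᵀ *ᵥ star v = 0 := by
    have h := congrArg star hq
    rw [star_add, star_zero, hB₁, hD₁, star_real_mulVec, star_real_mulVec] at h
    rw [hB₁, hD₁]
    exact h
  -- general symplectic bilinear identity
  have gen : ∀ (s t x y : Fin d → ℂ),
      (A₁ᵀ *ᵥ s + C₁ᵀ *ᵥ t) ⬝ᵥ (B₁ᵀ *ᵥ x + D₁ᵀ *ᵥ y)
        - (B₁ᵀ *ᵥ s + D₁ᵀ *ᵥ t) ⬝ᵥ (A₁ᵀ *ᵥ x + C₁ᵀ *ᵥ y)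
        = s ⬝ᵥ y - t ⬝ᵥ x := by
    intro s t x y
    simp only [dotProduct_add, add_dotProduct, tdot, Matrix.mulVec_mulVec]
    rw [R1c, R2c, R2c', R3c]
    simp only [Matrix.add_mulVec, Matrix.one_mulVec, dotProduct_add]
    ring
  have key : star z ⬝ᵥ v - star v ⬝ᵥ z = 0 := by
    have := gen (star z) (star v) z v
    rw [hq, hqs] at this
    simpa using this.symm
  -- deduce ⟨v, (Θ + Θᴴ) v⟩ = 0
  have hkey : star v ⬝ᵥ ((Θ + Θᴴ) *ᵥ v) = 0 := by
    have hsz : star z = Complex.I • star u := by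
      rw [hz, star_smul]; simp
    have e1 : star z ⬝ᵥ v = Complex.I * (star u ⬝ᵥ v) := by
      rw [hsz, smul_dotProduct]; simp
    have e2 : star v ⬝ᵥ z = -Complex.I * (star v ⬝ᵥ u) := by
      rw [hz, dotProduct_smul]; simp
    have e3 : star u ⬝ᵥ v = star v ⬝ᵥ (Θᴴ *ᵥ v) := by
      rw [hu, Matrix.star_mulVec, ← Matrix.dotProduct_mulVec]
    rw [e1, e2, e3] at key
    rw [Matrix.add_mulVec, dotProduct_add]
    have hI : (Complex.I)⁻¹ ≠ 0 := by simp [Complex.I_ne_zero]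
    have : Complex.I * (star v ⬝ᵥ (Θᴴ *ᵥ v) + star v ⬝ᵥ (Θ *ᵥ v)) = 0 := by
      rw [hu] at key; ring_nf; ring_nf at key; linear_combination key
    have := mul_eq_zero.mp this
    rcases this with h | h
    · exact absurd h Complex.I_ne_zero
    · rw [add_comm] at h; exact h
  -- real part computation
  set X := matRe Θ with hX
  have HH : Θ + Θᴴ = Matrix.of fun i j => ((2 * X i j : ℝ) : ℂ) := by
    funext i j
    have hsym : Θ j i = Θ i j := congrFun (congrFun hΘsymm i) j
    simp only [Matrix.add_apply, Matrix.conjTranspose_apply, hsym, Matrix.of_apply]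
    rw [hX]
    simpa [matRe] using (Complex.add_conj (Θ i j))
  set a : Fin d → ℝ := fun i => (v i).re with ha
  set b : Fin d → ℝ := fun i => (v i).im with hb
  have hexp : (star v ⬝ᵥ ((Θ + Θᴴ) *ᵥ v)).re
      = 2 * (a ⬝ᵥ (X *ᵥ a) + b ⬝ᵥ (X *ᵥ b)) := by
    rw [HH]
    simp only [dotProduct, Matrix.mulVec, dotProduct, Matrix.of_apply,
      Pi.star_apply, Finset.mul_sum, Complex.re_sum, mul_add, Finset.sum_add_distrib]
    rw [← Finset.sum_add_distrib]
    refine Finset.sum_congr rfl fun i _ => ?_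
    rw [← Finset.sum_add_distrib]
    refine Finset.sum_congr rfl fun j _ => ?_
    simp only [Complex.mul_re, Complex.mul_im, Complex.star_def, Complex.conj_re,
      Complex.conj_im, Complex.ofReal_re, Complex.ofReal_im, ha, hb]
    ring
  have hzero : a ⬝ᵥ (X *ᵥ a) + b ⬝ᵥ (X *ᵥ b) = 0 := by
    have : (star v ⬝ᵥ ((Θ + Θᴴ) *ᵥ v)).re = 0 := by rw [hkey]; simp
    rw [hexp] at this; linarith
  have hva : a ≠ 0 ∨ b ≠ 0 := by
    by_contra h
    push_neg at h
    apply hv0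
    funext i
    have h1 := congrFun h.1 i
    have h2 := congrFun h.2 i
    simp only [ha, hb, Pi.zero_apply] at h1 h2
    exact Complex.ext h1 h2
  have hsa : 0 ≤ a ⬝ᵥ (X *ᵥ a) := by
    have := hΘre.posSemidef.dotProduct_mulVec_nonneg a
    simpa using this
  have hsb : 0 ≤ b ⬝ᵥ (X *ᵥ b) := by
    have := hΘre.posSemidef.dotProduct_mulVec_nonneg b
    simpa using this
  rcases hva with h | h
  · have := hΘre.dotProduct_mulVec_pos h
    simp only [star_trivial] at this
    linarith
  · have := hΘre.dotProduct_mulVec_pos h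
    simp only [star_trivial] at this
    linarith
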